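/- Define f(α,θ) = Λ(α+θ) − Λ(α−θ) + (2/3)Λ(θ) − (2/3)Λ(2θ) for real α, θ. Then for all real α, θ one has f(α,θ) ≥ −(8/3)·Λ(π/4), and equality f(α,θ) = −(8/3)·Λ(π/4) holds if and only if α ≡ 0 (mod π) and θ ≡ 3π/4 (mod π). -/

import Mathlib

open Real

/-- The Lobachevsky function `Λ(x) = -∫₀ˣ log|2 sin t| dt`. -/
noncomputable def lob (x : ℝ) : ℝ := -∫ t in (0:ℝ)..x, Real.log |2 * Real.sin t|

/-- `f(α,θ) = Λ(α+θ) − Λ(α−θ) + (2/3)Λ(θ) − (2/3)Λ(2θ)`. -/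
noncomputable def lobf (α θ : ℝ) : ℝ :=
  lob (α + θ) - lob (α - θ) + (2/3) * lob θ - (2/3) * lob (2*θ)

open Real MeasureTheory intervalIntegral Set

lemma logabs_bound {x : ℝ} (hx : 0 < x) :
    |Real.log x| ≤ 2 * x ^ (-(1/2) : ℝ) + 2 * x ^ ((1/2) : ℝ) := by
  have h1 : Real.log x ≤ 2 * x ^ ((1/2) : ℝ) := by
    have := Real.log_le_sub_one_of_pos (Real.rpow_pos_of_pos hx ((1/2):ℝ))
    have hl : Real.log (x ^ ((1/2):ℝ)) = (1/2) * Real.log x := Real.log_rpow hx _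
    nlinarith [Real.rpow_pos_of_pos hx ((1/2):ℝ)]
  have h2 : -Real.log x ≤ 2 * x ^ (-(1/2) : ℝ) := by
    have := Real.log_le_sub_one_of_pos (Real.rpow_pos_of_pos hx (-(1/2):ℝ))
    have hl : Real.log (x ^ (-(1/2):ℝ)) = (-(1/2)) * Real.log x := Real.log_rpow hx _
    nlinarith [Real.rpow_pos_of_pos hx (-(1/2):ℝ)]
  have p1 : (0:ℝ) ≤ 2 * x ^ (-(1/2) : ℝ) := by positivity
  have p2 : (0:ℝ) ≤ 2 * x ^ ((1/2) : ℝ) := by positivity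
  rw [abs_le]; constructor <;> linarith

lemma il_log_right {b : ℝ} (hb : 0 ≤ b) :
    IntervalIntegrable (fun x => Real.log |x|) volume 0 b := by
  have hF : IntervalIntegrable
      (fun x => 2 * x ^ (-(1/2) : ℝ) + 2 * x ^ ((1/2) : ℝ)) volume 0 b :=
    ((intervalIntegral.intervalIntegrable_rpow' (by norm_num)).const_mul 2).add
      ((intervalIntegral.intervalIntegrable_rpow' (by norm_num)).const_mul 2)
  apply hF.mono_fun
  · exact ((measurable_abs.log)).aestronglyMeasurable
  · rw [uIoc_of_le hb]
    filter_upwards [ae_restrict_mem measurableSet_Ioc] with x hx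
    have hx0 : 0 < x := hx.1
    have hF0 : (0:ℝ) ≤ 2 * x ^ (-(1/2) : ℝ) + 2 * x ^ ((1/2) : ℝ) := by positivity
    rw [Real.norm_eq_abs, Real.norm_eq_abs, abs_of_nonneg hF0, abs_of_pos hx0]
    exact logabs_bound hx0

lemma il_logabs (a b : ℝ) :
    IntervalIntegrable (fun x => Real.log |x|) volume a b := by
  have key : ∀ c : ℝ, IntervalIntegrable (fun x => Real.log |x|) volume 0 c := by
    intro c
    rcases le_or_gt 0 c with h | h
    · exact il_log_right h
    · have h2 := (IntervalIntegrable.iff_comp_neg (f := fun x => Real.log |x|)).mp (il_log_right (neg_nonneg.mpr h.le))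
      simp only [abs_neg, neg_zero, neg_neg] at h2
      exact h2
  exact (key a).symm.trans (key b)


noncomputable def lg (t : ℝ) : ℝ := Real.log |2 * Real.sin t|

lemma lg_meas : Measurable lg :=
  measurable_abs.log.comp ((measurable_sin.const_mul 2))

lemma lg_even (t : ℝ) : lg (-t) = lg t := by
  simp [lg, Real.sin_neg, mul_neg, abs_neg]

lemma lg_per (t : ℝ) : lg (t + π) = lg t := by
  simp [lg, Real.sin_add_pi, mul_neg, abs_neg]

lemma abs_sin_ge {x : ℝ} (h : |x| ≤ π / 2) : 2 / π * |x| ≤ |Real.sin x| := by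
  have h1 := Real.mul_le_sin (abs_nonneg x) h
  have h2 : Real.sin |x| = |Real.sin x| := by
    rcases le_or_gt 0 x with hx | hx
    · rw [abs_of_nonneg hx, abs_of_nonneg]
      exact Real.sin_nonneg_of_nonneg_of_le_pi hx (by rw [abs_of_nonneg hx] at h; linarith [Real.pi_pos])
    · rw [abs_of_neg hx, Real.sin_neg, eq_comm, abs_eq_neg_self]
      rw [abs_of_neg hx] at h
      exact Real.sin_nonpos_of_nonpos_of_neg_pi_le hx.le (by linarith [Real.pi_pos])
  linarith [h1, h2.le, h2.ge]


lemma lg_II_base : IntervalIntegrable lg volume (-(π/2)) (π/2) := by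
  have hF : IntervalIntegrable
      (fun x => (Real.log 2 + |Real.log (4/π)|) + |Real.log (abs x)|) volume (-(π/2)) (π/2) :=
    intervalIntegrable_const.add (il_logabs _ _).abs
  apply hF.mono_fun (lg_meas.aestronglyMeasurable)
  have hsub : uIoc (-(π/2)) (π/2) ⊆ Icc (-(π/2)) (π/2) := by
    rw [uIoc_of_le (by linarith [Real.pi_pos])]
    exact Ioc_subset_Icc_self
  filter_upwards [ae_restrict_mem measurableSet_uIoc] with x hx
  have hx' : |x| ≤ π/2 := by
    have := hsub hx; rw [mem_Icc] at this; rw [abs_le]; exact this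
  have hlog2 : (0:ℝ) ≤ Real.log 2 := Real.log_nonneg (by norm_num)
  have hRHS : (0:ℝ) ≤ (Real.log 2 + |Real.log (4/π)|) + |Real.log (abs x)| := by positivity
  rw [Real.norm_eq_abs, Real.norm_eq_abs, abs_of_nonneg hRHS]
  rcases eq_or_ne x 0 with rfl | hx0
  · simp only [lg, Real.sin_zero, mul_zero, abs_zero, Real.log_zero]
    positivity
  · have habs : 0 < |x| := abs_pos.mpr hx0
    have hsin : 2/π * |x| ≤ |Real.sin x| := abs_sin_ge hx'
    have hsinpos : 0 < |Real.sin x| := lt_of_lt_of_le (by positivity) hsin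
    have h2sin : |2 * Real.sin x| = 2 * |Real.sin x| := by
      rw [abs_mul]; norm_num
    have hup : lg x ≤ Real.log 2 := by
      rw [lg]
      apply Real.log_le_log (by rw [h2sin]; positivity)
      rw [h2sin]
      have : |Real.sin x| ≤ 1 := abs_le.mpr ⟨Real.neg_one_le_sin x, Real.sin_le_one x⟩
      linarith
    have hdown : Real.log (4/π) + Real.log |x| ≤ lg x := by
      have h1 : Real.log ((4/π) * |x|) ≤ Real.log |2 * Real.sin x| := by
        apply Real.log_le_log (by positivity)
        rw [h2sin]
        have : (4/π) * |x| = 2 * (2/π * |x|) := by ring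
        rw [this]
        linarith
      rw [Real.log_mul (by positivity) (ne_of_gt habs)] at h1
      exact h1
    rw [abs_le]
    constructor
    · have : -(Real.log 2 + |Real.log (4/π)| + |Real.log (abs x)|) ≤ Real.log (4/π) + Real.log |x| := by
        have := abs_le.mp (le_refl |Real.log (4/π)|)
        have h1 := neg_abs_le (Real.log (4/π))
        have h2 := neg_abs_le (Real.log (abs x))
        linarith
      linarith
    · have h2 := abs_nonneg (Real.log (abs x))
      have h3 := abs_nonneg (Real.log (4/π))
      linarith

lemma lg_II_shift {a b : ℝ} (h : IntervalIntegrable lg volume a b) :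
    IntervalIntegrable lg volume (a + π) (b + π) := by
  have h2 := h.comp_sub_right π
  have he : (fun x => lg (x - π)) = lg := by
    funext x
    rw [← lg_per (x - π), sub_add_cancel]
  rwa [he] at h2


lemma lg_II_up : ∀ n : ℕ, IntervalIntegrable lg volume (-(π/2)) (-(π/2) + n * π)
  | 0 => by simpa using IntervalIntegrable.refl (f := lg) (μ := volume) (a := -(π/2))
  | (n+1) => by
    have h1 := lg_II_up n
    have h2 : ∀ m : ℕ, IntervalIntegrable lg volume (-(π/2) + m * π) (π/2 + m * π) := by
      intro m
      induction m with
      | zero => simpa using lg_II_base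
      | succ k ih =>
        have := lg_II_shift ih
        convert this using 1 <;> push_cast <;> ring
    have h3 := h2 n
    have h4 : (π/2 : ℝ) + n * π = -(π/2) + (n+1) * π := by push_cast; ring
    rw [h4] at h3
    have := h1.trans h3
    convert this using 2
    push_cast; ring

lemma lg_II_neg {a b : ℝ} (h : IntervalIntegrable lg volume a b) :
    IntervalIntegrable lg volume (-a) (-b) := by
  have h2 := (IntervalIntegrable.iff_comp_neg (f := lg)).mp h
  have he : (fun x => lg (-x)) = lg := by funext x; exact lg_even x
  rwa [he] at h2

lemma lg_II (a b : ℝ) : IntervalIntegrable lg volume a b := by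
  obtain ⟨n, hn⟩ := exists_nat_gt ((|a| + |b|) / π + 1)
  have hπ := Real.pi_pos
  have hn' : |a| + |b| + π < n * π := by
    have h1 : ((|a| + |b|) / π + 1) * π < n * π := by
      apply mul_lt_mul_of_pos_right hn hπ
    rwa [add_mul, div_mul_cancel₀ _ (ne_of_gt hπ), one_mul] at h1
  have hup := lg_II_up n
  have hdown := lg_II_neg hup
  simp only [neg_neg, neg_add] at hdown
  -- hdown : II lg (π/2) (π/2 - n*π) roughly
  have full : IntervalIntegrable lg volume (π/2 + -(n*π)) (-(π/2) + n * π) :=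
    hdown.symm.trans (lg_II_base.symm.trans hup)
  apply full.mono_set
  have hA := abs_nonneg a; have hB := abs_nonneg b
  have hle : π/2 + -(n*π) ≤ -(π/2) + n * π := by linarith
  rw [uIcc_of_le hle]
  intro x hx
  rw [Set.mem_uIcc] at hx
  have ha1 := le_abs_self a; have ha2 := neg_abs_le a
  have hb1 := le_abs_self b; have hb2 := neg_abs_le b
  rw [Set.mem_Icc]
  constructor
  · rcases hx with ⟨h5, h6⟩ | ⟨h5, h6⟩ <;> linarith
  · rcases hx with ⟨h5, h6⟩ | ⟨h5, h6⟩ <;> linarith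


lemma lob_eq (x : ℝ) : lob x = -∫ t in (0:ℝ)..x, lg t := rfl

lemma lob_continuous : Continuous lob :=
  (intervalIntegral.continuous_primitive lg_II 0).neg

lemma lob_hasDerivAt {x : ℝ} (h : Real.sin x ≠ 0) : HasDerivAt lob (-lg x) x := by
  have hcont : ContinuousAt lg x := by
    apply ContinuousAt.comp (Real.continuousAt_log ?_)
    · exact (continuous_abs.comp (continuous_const.mul Real.continuous_sin)).continuousAt
    · simp only [abs_ne_zero]
      exact mul_ne_zero two_ne_zero h
  have := intervalIntegral.integral_hasDerivAt_right (lg_II 0 x)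
    (lg_meas.stronglyMeasurable.stronglyMeasurableAtFilter) hcont
  exact this.neg

lemma lob_zero : lob 0 = 0 := by simp [lob]

lemma lob_odd (x : ℝ) : lob (-x) = -lob x := by
  have h1 : ∫ t in (0:ℝ)..x, lg (-t) = ∫ t in (-x)..(0:ℝ), lg t := by
    simpa using intervalIntegral.integral_comp_neg (a := 0) (b := x) lg
  simp only [lg_even] at h1
  have h3 : ∫ t in (0:ℝ)..(-x), lg t = -∫ t in (-x)..(0:ℝ), lg t :=
    intervalIntegral.integral_symm (-x) 0
  rw [lob_eq, lob_eq, h3, ← h1]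

lemma sincos_ae : ∀ᵐ u : ℝ, Real.sin u ≠ 0 ∧ Real.cos u ≠ 0 := by
  have h1 : {u : ℝ | Real.sin u = 0}.Countable := by
    apply Set.Countable.mono _ (Set.countable_range (fun n : ℤ => (n : ℝ) * π))
    intro x hx
    obtain ⟨n, hn⟩ := Real.sin_eq_zero_iff.mp hx
    exact ⟨n, hn⟩
  have h2 : {u : ℝ | Real.cos u = 0}.Countable := by
    apply Set.Countable.mono _ (Set.countable_range (fun n : ℤ => (2*(n:ℝ)+1) * π / 2))
    intro x hx
    obtain ⟨n, hn⟩ := Real.cos_eq_zero_iff.mp hx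
    exact ⟨n, hn.symm⟩
  have h3 : {u : ℝ | ¬(Real.sin u ≠ 0 ∧ Real.cos u ≠ 0)}.Countable := by
    apply Set.Countable.mono _ (h1.union h2)
    intro x hx
    simp only [Set.mem_setOf_eq, not_and_or, not_not] at hx
    rcases hx with h | h
    · exact Or.inl h
    · exact Or.inr h
  exact h3.measure_zero volume

lemma lob_dup_raw (θ : ℝ) : lob (2*θ) = 2 * lob θ + 2 * lob (θ + π/2) - 2 * lob (π/2) := by
  have h1 : ∫ u in (0:ℝ)..θ, lg (2*u) = (2:ℝ)⁻¹ • ∫ t in (0:ℝ)..(2*θ), lg t := by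
    have := intervalIntegral.integral_comp_mul_left (a := (0:ℝ)) (b := θ) (c := (2:ℝ)) lg
      (two_ne_zero)
    rw [this]; norm_num
  have h2 : ∫ u in (0:ℝ)..θ, lg (2*u) = ∫ u in (0:ℝ)..θ, (lg u + lg (u + π/2)) := by
    apply intervalIntegral.integral_congr_ae
    filter_upwards [sincos_ae] with u ⟨hs, hc⟩ _
    have e1 : lg (u + π/2) = Real.log |2 * Real.cos u| := by
      rw [lg, Real.sin_add_pi_div_two]
    rw [lg, e1, lg]
    rw [Real.sin_two_mul]
    rw [show (2 : ℝ) * (2 * Real.sin u * Real.cos u) = (2 * Real.sin u) * (2 * Real.cos u) from by ring]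
    rw [abs_mul, Real.log_mul]
    · simp only [abs_ne_zero]; exact mul_ne_zero two_ne_zero hs
    · simp only [abs_ne_zero]; exact mul_ne_zero two_ne_zero hc
  have h3 : ∫ u in (0:ℝ)..θ, (lg u + lg (u + π/2)) =
      (∫ u in (0:ℝ)..θ, lg u) + ∫ u in (0:ℝ)..θ, lg (u + π/2) := by
    apply intervalIntegral.integral_add (lg_II 0 θ)
    have := (lg_II (π/2) (θ + π/2)).comp_add_right (π/2)
    simpa using this
  have h4 : ∫ u in (0:ℝ)..θ, lg (u + π/2) = ∫ t in (π/2:ℝ)..(θ + π/2), lg t := by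
    have := intervalIntegral.integral_comp_add_right (a := 0) (b := θ) lg (π/2)
    simpa using this
  have h5 : (∫ t in (0:ℝ)..(π/2), lg t) + ∫ t in (π/2:ℝ)..(θ + π/2), lg t
      = ∫ t in (0:ℝ)..(θ + π/2), lg t := by
    exact intervalIntegral.integral_add_adjacent_intervals (lg_II 0 (π/2)) (lg_II (π/2) (θ + π/2))
  simp only [lob_eq]
  have h6 : ∫ t in (0:ℝ)..(2*θ), lg t = 2 * ∫ u in (0:ℝ)..θ, lg (2*u) := by
    rw [h1, smul_eq_mul]; ring
  rw [h6, h2, h3, h4]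
  linarith [h5]

lemma lob_pi : lob π = 0 := by
  have := lob_dup_raw (π/2)
  rw [show 2 * (π/2) = π from by ring, show π/2 + π/2 = π from by ring] at this
  linarith

lemma lob_per (x : ℝ) : lob (x + π) = lob x := by
  have h1 : ∫ t in (0:ℝ)..(x+π), lg t = (∫ t in (0:ℝ)..x, lg t) + ∫ t in x..(x+π), lg t :=
    (intervalIntegral.integral_add_adjacent_intervals (lg_II 0 x) (lg_II x (x+π))).symm
  have h2 : ∫ t in x..(x+π), lg t = ∫ t in (0:ℝ)..(0+π), lg t :=
    Function.Periodic.intervalIntegral_add_eq lg_per x 0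
  have h3 : (0:ℝ) + π = π := by ring
  rw [h3] at h2
  have h4 : ∫ t in (0:ℝ)..π, lg t = 0 := by
    have := lob_pi; rw [lob_eq] at this; linarith
  rw [lob_eq, lob_eq, h1, h2, h4]; ring

lemma lob_pi_div_two : lob (π/2) = 0 := by
  have h1 : lob (π/2) = lob (-(π/2)) := by
    have := lob_per (-(π/2))
    rw [show -(π/2) + π = π/2 from by ring] at this
    exact this
  rw [lob_odd] at h1
  linarith

lemma lob_dup (θ : ℝ) : lob (2*θ) = 2 * lob θ + 2 * lob (θ + π/2) := by
  rw [lob_dup_raw, lob_pi_div_two]; ring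

lemma lob_periodic : Function.Periodic lob π := lob_per

lemma lob_add_int (x : ℝ) (n : ℤ) : lob (x + n * π) = lob x := by
  have := lob_periodic.sub_int_mul_eq (x := x) (n := -n)
  push_cast at this
  rw [show x - -(n:ℝ) * π = x + n * π from by ring] at this
  exact this

noncomputable def sfun (θ : ℝ) : ℝ := lob θ - lob (θ + π/2)

lemma sfun_continuous : Continuous sfun :=
  lob_continuous.sub (lob_continuous.comp (continuous_id.add continuous_const))

lemma sfun_hasDerivAt {θ : ℝ} (hs : Real.sin θ ≠ 0) (hc : Real.cos θ ≠ 0) :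
    HasDerivAt sfun (Real.log |2 * Real.cos θ| - Real.log |2 * Real.sin θ|) θ := by
  have h1 : HasDerivAt lob (-lg θ) θ := lob_hasDerivAt hs
  have h2 : HasDerivAt (fun x => lob (x + π/2)) (-lg (θ + π/2)) θ := by
    exact HasDerivAt.comp_add_const θ (π/2) (lob_hasDerivAt (by
      rw [Real.sin_add_pi_div_two]; exact hc))
  have h3 := h1.sub h2
  have e1 : lg (θ + π/2) = Real.log |2 * Real.cos θ| := by
    rw [lg, Real.sin_add_pi_div_two]
  exact h3.congr_deriv (by rw [e1, lg]; ring)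

lemma sfun_zero : sfun 0 = 0 := by
  rw [sfun, lob_zero, zero_add, lob_pi_div_two]; ring

lemma lob_three_pi_four : lob (3*π/4) = -lob (π/4) := by
  have := lob_per (-(π/4))
  rw [show -(π/4) + π = 3*π/4 from by ring, lob_odd] at this
  exact this

lemma sfun_pi_four : sfun (π/4) = 2 * lob (π/4) := by
  rw [sfun, show π/4 + π/2 = 3*π/4 from by ring, lob_three_pi_four]; ring

lemma sfun_anti (θ : ℝ) : sfun (θ + π/2) = -sfun θ := by
  rw [sfun, sfun, show θ + π/2 + π/2 = θ + π from by ring, lob_per]; ring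

lemma sfun_strictMonoOn : StrictMonoOn sfun (Icc 0 (π/4)) := by
  have hπ := Real.pi_pos
  apply strictMonoOn_of_deriv_pos (convex_Icc _ _) sfun_continuous.continuousOn
  intro x hx
  rw [interior_Icc, mem_Ioo] at hx
  have hx1 : 0 < x := hx.1
  have hx2 : x < π/4 := hx.2
  have hsin : 0 < Real.sin x := Real.sin_pos_of_pos_of_lt_pi hx1 (by linarith)
  have hcos : 0 < Real.cos x := Real.cos_pos_of_mem_Ioo ⟨by linarith, by linarith⟩
  have hlt : Real.sin x < Real.cos x := by
    have h1 : Real.sin x < Real.sin (π/4) := by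
      apply Real.strictMonoOn_sin ⟨by linarith, by linarith⟩ ⟨by linarith, by linarith⟩ hx2
    have h2 : Real.cos (π/4) < Real.cos x := by
      apply Real.strictAntiOn_cos ⟨by linarith, by linarith⟩ ⟨by linarith, by linarith⟩ hx2
    rw [Real.sin_pi_div_four] at h1
    rw [Real.cos_pi_div_four] at h2
    linarith
  have hd := sfun_hasDerivAt (ne_of_gt hsin) (ne_of_gt hcos)
  rw [hd.deriv]
  have e1 : |2 * Real.sin x| = 2 * Real.sin x := abs_of_pos (by linarith)
  have e2 : |2 * Real.cos x| = 2 * Real.cos x := abs_of_pos (by linarith)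
  rw [e1, e2, sub_pos]
  exact Real.log_lt_log (by linarith) (by linarith)

lemma sfun_strictAntiOn : StrictAntiOn sfun (Icc (π/4) (π/2)) := by
  have hπ := Real.pi_pos
  apply strictAntiOn_of_deriv_neg (convex_Icc _ _) sfun_continuous.continuousOn
  intro x hx
  rw [interior_Icc, mem_Ioo] at hx
  have hx1 : π/4 < x := hx.1
  have hx2 : x < π/2 := hx.2
  have hsin : 0 < Real.sin x := Real.sin_pos_of_pos_of_lt_pi (by linarith) (by linarith)
  have hcos : 0 < Real.cos x := Real.cos_pos_of_mem_Ioo ⟨by linarith, by linarith⟩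
  have hlt : Real.cos x < Real.sin x := by
    have h1 : Real.sin (π/4) < Real.sin x := by
      apply Real.strictMonoOn_sin ⟨by linarith, by linarith⟩ ⟨by linarith, by linarith⟩ hx1
    have h2 : Real.cos x < Real.cos (π/4) := by
      apply Real.strictAntiOn_cos ⟨by linarith, by linarith⟩ ⟨by linarith, by linarith⟩ hx1
    rw [Real.sin_pi_div_four] at h1
    rw [Real.cos_pi_div_four] at h2
    linarith
  have hd := sfun_hasDerivAt (ne_of_gt hsin) (ne_of_gt hcos)
  rw [hd.deriv]
  have e1 : |2 * Real.sin x| = 2 * Real.sin x := abs_of_pos (by linarith)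
  have e2 : |2 * Real.cos x| = 2 * Real.cos x := abs_of_pos (by linarith)
  rw [e1, e2, sub_neg]
  exact Real.log_lt_log (by linarith) (by linarith)

lemma lob_pi_four_pos : 0 < lob (π/4) := by
  have hπ := Real.pi_pos
  have h := sfun_strictMonoOn (left_mem_Icc.mpr (by linarith)) (right_mem_Icc.mpr (by linarith))
    (by linarith : (0:ℝ) < π/4)
  rw [sfun_zero, sfun_pi_four] at h
  linarith

lemma sfun_pi_div_two : sfun (π/2) = 0 := by
  have := sfun_anti 0
  rw [zero_add, sfun_zero] at this
  simpa using this

lemma sfun_le_on {v : ℝ} (hv : v ∈ Icc 0 (π/2)) : sfun v ≤ 2 * lob (π/4) := by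
  have hπ := Real.pi_pos
  rcases le_total v (π/4) with h | h
  · rcases eq_or_lt_of_le h with rfl | h'
    · rw [sfun_pi_four]
    · have := sfun_strictMonoOn ⟨hv.1, h⟩ (right_mem_Icc.mpr (by linarith)) h'
      rw [sfun_pi_four] at this; linarith
  · rcases eq_or_lt_of_le h with rfl | h'
    · rw [sfun_pi_four]
    · have := sfun_strictAntiOn (left_mem_Icc.mpr (by linarith)) ⟨h, hv.2⟩ h'
      rw [sfun_pi_four] at this; linarith

lemma sfun_lt_on {v : ℝ} (hv : v ∈ Icc 0 (π/2)) (hne : v ≠ π/4) : sfun v < 2 * lob (π/4) := by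
  have hπ := Real.pi_pos
  rcases le_total v (π/4) with h | h
  · have h' : v < π/4 := lt_of_le_of_ne h hne
    have := sfun_strictMonoOn ⟨hv.1, h⟩ (right_mem_Icc.mpr (by linarith)) h'
    rw [sfun_pi_four] at this; linarith
  · have h' : π/4 < v := lt_of_le_of_ne h (Ne.symm hne)
    have := sfun_strictAntiOn (left_mem_Icc.mpr (by linarith)) ⟨h, hv.2⟩ h'
    rw [sfun_pi_four] at this; linarith

lemma strictMonoOn_glue {f : ℝ → ℝ} {a c b : ℝ} (hac : a ≤ c) (hcb : c ≤ b)
    (h1 : StrictMonoOn f (Icc a c)) (h2 : StrictMonoOn f (Icc c b)) :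
    StrictMonoOn f (Icc a b) := by
  intro x hx y hy hxy
  rcases le_total y c with hyc | hcy
  · exact h1 ⟨hx.1, le_trans hxy.le hyc⟩ ⟨hy.1, hyc⟩ hxy
  · rcases le_total x c with hxc | hcx
    · rcases eq_or_lt_of_le hxc with rfl | hxc'
      · exact h2 (left_mem_Icc.mpr hcb) ⟨hcy, hy.2⟩ hxy
      · have hfxc : f x < f c := h1 ⟨hx.1, hxc⟩ (right_mem_Icc.mpr hac) hxc'
        rcases eq_or_lt_of_le hcy with rfl | hcy'
        · exact hfxc
        · exact lt_trans hfxc (h2 (left_mem_Icc.mpr hcb) ⟨hcy, hy.2⟩ hcy')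
    · exact h2 ⟨hcx, hx.2⟩ ⟨le_trans hcx hxy.le, hy.2⟩ hxy

lemma strictAntiOn_glue {f : ℝ → ℝ} {a c b : ℝ} (hac : a ≤ c) (hcb : c ≤ b)
    (h1 : StrictAntiOn f (Icc a c)) (h2 : StrictAntiOn f (Icc c b)) :
    StrictAntiOn f (Icc a b) := by
  intro x hx y hy hxy
  rcases le_total y c with hyc | hcy
  · exact h1 ⟨hx.1, le_trans hxy.le hyc⟩ ⟨hy.1, hyc⟩ hxy
  · rcases le_total x c with hxc | hcx
    · rcases eq_or_lt_of_le hxc with rfl | hxc'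
      · exact h2 (left_mem_Icc.mpr hcb) ⟨hcy, hy.2⟩ hxy
      · have hfxc : f c < f x := h1 ⟨hx.1, hxc⟩ (right_mem_Icc.mpr hac) hxc'
        rcases eq_or_lt_of_le hcy with rfl | hcy'
        · exact hfxc
        · exact lt_trans (h2 (left_mem_Icc.mpr hcb) ⟨hcy, hy.2⟩ hcy') hfxc
    · exact h2 ⟨hcx, hx.2⟩ ⟨le_trans hcx hxy.le, hy.2⟩ hxy

lemma sin_sq_diff (a u : ℝ) :
    Real.sin (a - u) ^ 2 - Real.sin (a + u) ^ 2 = -(Real.sin (2*a) * Real.sin (2*u)) := by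
  rw [Real.sin_sub, Real.sin_add, Real.sin_two_mul, Real.sin_two_mul]
  have hc := Real.sin_sq_add_cos_sq a
  have hc2 := Real.sin_sq_add_cos_sq u
  nlinarith [hc, hc2]

noncomputable def Gfun (u α : ℝ) : ℝ := lob (α + u) - lob (α - u)

lemma Gfun_continuous (u : ℝ) : Continuous (Gfun u) :=
  (lob_continuous.comp (continuous_id.add continuous_const)).sub
    (lob_continuous.comp (continuous_id.sub continuous_const))

lemma Gfun_hasDerivAt {u α : ℝ} (h1 : Real.sin (α + u) ≠ 0) (h2 : Real.sin (α - u) ≠ 0) :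
    HasDerivAt (Gfun u) (lg (α - u) - lg (α + u)) α := by
  have d1 : HasDerivAt (fun x => lob (x + u)) (-lg (α + u)) α :=
    HasDerivAt.comp_add_const α u (lob_hasDerivAt h1)
  have d2 : HasDerivAt (fun x => lob (x - u)) (-lg (α - u)) α := by
    have h2' : Real.sin (α + -u) ≠ 0 := by rwa [← sub_eq_add_neg]
    have := HasDerivAt.comp_add_const α (-u) (lob_hasDerivAt h2')
    simp only [← sub_eq_add_neg] at this
    exact this
  have := d1.sub d2
  exact this.congr_deriv (by ring)

lemma Gfun_zero_val (u : ℝ) : Gfun u 0 = 2 * lob u := by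
  rw [Gfun, zero_add, zero_sub, lob_odd]; ring

lemma Gfun_half_val (u : ℝ) : Gfun u (π/2) = 2 * lob (u + π/2) := by
  have h1 : lob (π/2 - u) = -lob (u + π/2) := by
    have := lob_per (-(u + π/2))
    rw [show -(u + π/2) + π = π/2 - u from by ring, lob_odd] at this
    exact this
  rw [Gfun, show π/2 + u = u + π/2 from by ring, h1]; ring

lemma deriv_Gfun_pos {u α : ℝ} (h1 : Real.sin (α + u) ≠ 0) (h2 : Real.sin (α - u) ≠ 0)
    (hsign : Real.sin (2*α) * Real.sin (2*u) < 0) :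
    0 < deriv (Gfun u) α := by
  rw [(Gfun_hasDerivAt h1 h2).deriv]
  have hsq : Real.sin (α + u) ^ 2 < Real.sin (α - u) ^ 2 := by
    have := sin_sq_diff α u
    nlinarith
  have habs : |Real.sin (α + u)| < |Real.sin (α - u)| := sq_lt_sq.mp hsq
  have hpos : 0 < |Real.sin (α + u)| := abs_pos.mpr h1
  rw [lg, lg, sub_pos]
  apply Real.log_lt_log
  · rw [abs_mul]; positivity
  · rw [abs_mul, abs_mul]
    have : |(2:ℝ)| = 2 := by norm_num
    rw [this]
    linarith
lemma deriv_Gfun_neg {u α : ℝ} (h1 : Real.sin (α + u) ≠ 0) (h2 : Real.sin (α - u) ≠ 0)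
    (hsign : 0 < Real.sin (2*α) * Real.sin (2*u)) :
    deriv (Gfun u) α < 0 := by
  rw [(Gfun_hasDerivAt h1 h2).deriv]
  have hsq : Real.sin (α - u) ^ 2 < Real.sin (α + u) ^ 2 := by
    have := sin_sq_diff α u
    nlinarith
  have habs : |Real.sin (α - u)| < |Real.sin (α + u)| := sq_lt_sq.mp hsq
  have hpos : 0 < |Real.sin (α - u)| := abs_pos.mpr h2
  rw [lg, lg, sub_neg]
  apply Real.log_lt_log
  · rw [abs_mul]; positivity
  · rw [abs_mul, abs_mul]
    have : |(2:ℝ)| = 2 := by norm_num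
    rw [this]
    linarith

lemma sin_ne_zero_of_mem {x : ℝ} (h1 : 0 < x) (h2 : x < π) : Real.sin x ≠ 0 :=
  ne_of_gt (Real.sin_pos_of_pos_of_lt_pi h1 h2)

lemma sin_ne_zero_of_neg {x : ℝ} (h1 : -π < x) (h2 : x < 0) : Real.sin x ≠ 0 :=
  ne_of_lt (Real.sin_neg_of_neg_of_neg_pi_lt h2 h1)

lemma Gfun_strictAntiOn {u : ℝ} (hu1 : 0 < u) (hu2 : u < π/2) :
    StrictAntiOn (Gfun u) (Icc 0 (π/2)) := by
  have hπ := Real.pi_pos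
  have hs2u : 0 < Real.sin (2*u) := Real.sin_pos_of_pos_of_lt_pi (by linarith) (by linarith)
  have piece : ∀ a b : ℝ, 0 ≤ a → b ≤ π/2 →
      (∀ x, a < x → x < b → Real.sin (x - u) ≠ 0) → StrictAntiOn (Gfun u) (Icc a b) := by
    intro a b ha hb hne
    apply strictAntiOn_of_deriv_neg (convex_Icc _ _) (Gfun_continuous u).continuousOn
    intro x hx
    rw [interior_Icc, mem_Ioo] at hx
    have hx1 : 0 < x := lt_of_le_of_lt ha hx.1
    have hx2 : x < π/2 := lt_of_lt_of_le hx.2 hb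
    apply deriv_Gfun_neg
    · exact sin_ne_zero_of_mem (by linarith) (by linarith)
    · exact hne x hx.1 hx.2
    · have : 0 < Real.sin (2*x) := Real.sin_pos_of_pos_of_lt_pi (by linarith) (by linarith)
      positivity
  apply strictAntiOn_glue (le_of_lt hu1) (le_of_lt hu2)
  · apply piece 0 u le_rfl (by linarith)
    intro x hx1 hx2
    exact sin_ne_zero_of_neg (by linarith) (by linarith)
  · apply piece u (π/2) (le_of_lt hu1) le_rfl
    intro x hx1 hx2
    exact sin_ne_zero_of_mem (by linarith) (by linarith)

lemma Gfun_strictMonoOn {u : ℝ} (hu1 : π/2 < u) (hu2 : u < π) :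
    StrictMonoOn (Gfun u) (Icc 0 (π/2)) := by
  have hπ := Real.pi_pos
  have hs2u : Real.sin (2*u) < 0 := by
    have h : Real.sin (2*u - 2*π) < 0 :=
      Real.sin_neg_of_neg_of_neg_pi_lt (by linarith) (by linarith)
    rwa [show 2*u - 2*π = 2*u - 2*π from rfl, Real.sin_sub_two_pi] at h
  have piece : ∀ a b : ℝ, 0 ≤ a → b ≤ π/2 →
      (∀ x, a < x → x < b → Real.sin (x + u) ≠ 0) → StrictMonoOn (Gfun u) (Icc a b) := by
    intro a b ha hb hne
    apply strictMonoOn_of_deriv_pos (convex_Icc _ _) (Gfun_continuous u).continuousOn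
    intro x hx
    rw [interior_Icc, mem_Ioo] at hx
    have hx1 : 0 < x := lt_of_le_of_lt ha hx.1
    have hx2 : x < π/2 := lt_of_lt_of_le hx.2 hb
    apply deriv_Gfun_pos
    · exact hne x hx.1 hx.2
    · exact sin_ne_zero_of_neg (by linarith) (by linarith)
    · have h2x : 0 < Real.sin (2*x) := Real.sin_pos_of_pos_of_lt_pi (by linarith) (by linarith)
      nlinarith
  have hc1 : (0:ℝ) ≤ π - u := by linarith
  have hc2 : π - u ≤ π/2 := by linarith
  apply strictMonoOn_glue hc1 hc2
  · apply piece 0 (π - u) le_rfl hc2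
    intro x hx1 hx2
    exact sin_ne_zero_of_mem (by linarith) (by linarith)
  · apply piece (π - u) (π/2) hc1 le_rfl
    intro x hx1 hx2
    have h1 : π < x + u := by linarith
    have h2 : x + u < 2*π := by linarith
    have : Real.sin (x + u - 2*π) < 0 :=
      Real.sin_neg_of_neg_of_neg_pi_lt (by linarith) (by linarith)
    rw [Real.sin_sub_two_pi] at this
    exact ne_of_lt this


lemma lobf_C (α u : ℝ) : lobf α u = Gfun u α - (2/3) * lob u - (4/3) * lob (u + π/2) := by
  rw [lobf, Gfun, lob_dup]; ring

lemma lobf_zero_val (u : ℝ) : lobf 0 u = (4/3) * sfun u := by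
  rw [lobf_C, Gfun_zero_val, sfun]; ring

lemma lobf_half_val (u : ℝ) : lobf (π/2) u = -(2/3) * sfun u := by
  rw [lobf_C, Gfun_half_val, sfun]; ring

lemma key_lemma {β u : ℝ} (hβ : β ∈ Icc 0 (π/2)) (hu : u ∈ Ico 0 π) :
    -(8/3) * lob (π/4) ≤ lobf β u ∧
      (lobf β u = -(8/3) * lob (π/4) ↔ (β = 0 ∧ u = 3*π/4)) := by
  have hπ := Real.pi_pos
  have hL := lob_pi_four_pos
  rcases eq_or_lt_of_le hu.1 with rfl | hu0
  · -- u = 0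
    have h0 : lobf β 0 = 0 := by
      rw [lobf]
      simp only [add_zero, sub_zero, mul_zero, lob_zero]
      ring
    rw [h0]
    refine ⟨by linarith, ?_, ?_⟩
    · intro h; exfalso; linarith
    · rintro ⟨-, h⟩; exfalso; linarith
  rcases lt_trichotomy u (π/2) with hulo | hueq | huhi
  · -- 0 < u < π/2 : min at π/2, value -(2/3) sfun u > -(8/3) L
    have hanti := Gfun_strictAntiOn hu0 hulo
    have hge : Gfun u (π/2) ≤ Gfun u β := by
      rcases eq_or_lt_of_le hβ.2 with heq | hlt
      · rw [heq]
      · exact (hanti hβ (right_mem_Icc.mpr (by linarith)) hlt).le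
    have hsle : sfun u ≤ 2 * lob (π/4) := sfun_le_on ⟨hu.1, hulo.le⟩
    have hval : lobf (π/2) u = -(2/3) * sfun u := lobf_half_val u
    have hβval : lobf β u = Gfun u β - (2/3) * lob u - (4/3) * lob (u + π/2) := lobf_C β u
    have hhalfval : lobf (π/2) u = Gfun u (π/2) - (2/3) * lob u - (4/3) * lob (u + π/2) :=
      lobf_C (π/2) u
    have hstrict : -(8/3) * lob (π/4) < lobf β u := by
      have : -(2/3) * sfun u ≥ -(4/3) * lob (π/4) := by linarith
      linarith
    refine ⟨hstrict.le, ?_, ?_⟩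
    · intro h; exfalso; linarith
    · rintro ⟨-, h⟩; exfalso; linarith
  · -- u = π/2
    subst hueq
    have h0 : lobf β (π/2) = 0 := by
      rw [lobf]
      have e1 : lob (β - π/2) = lob (β + π/2) := by
        have := lob_per (β - π/2)
        rw [show β - π/2 + π = β + π/2 from by ring] at this
        exact this.symm
      rw [e1, lob_pi_div_two, show 2 * (π/2) = π from by ring, lob_pi]
      ring
    rw [h0]
    refine ⟨by linarith, ?_, ?_⟩
    · intro h; exfalso; linarith
    · rintro ⟨-, h⟩; exfalso; linarith
  · -- π/2 < u < π
    have hmono := Gfun_strictMonoOn huhi hu.2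
    have hge : Gfun u 0 ≤ Gfun u β ∧ (Gfun u 0 = Gfun u β ↔ β = 0) := by
      constructor
      · rcases eq_or_lt_of_le hβ.1 with heq | hlt
        · rw [← heq]
        · exact (hmono (left_mem_Icc.mpr (by linarith)) hβ hlt).le
      · constructor
        · intro h
          by_contra hne
          have hlt : 0 < β := lt_of_le_of_ne hβ.1 (Ne.symm hne)
          have := hmono (left_mem_Icc.mpr (by linarith)) hβ hlt
          linarith
        · intro h; rw [h]
    have hu2 : u < π := hu.2
    set v := u - π/2 with hv
    have hvmem : v ∈ Icc 0 (π/2) := ⟨by rw [hv]; linarith, by rw [hv]; linarith⟩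
    have hsv : sfun u = -sfun v := by
      have := sfun_anti v
      rw [show v + π/2 = u from by ring] at this
      linarith
    have hsvle : sfun v ≤ 2 * lob (π/4) := sfun_le_on hvmem
    have hβval : lobf β u = Gfun u β - (2/3) * lob u - (4/3) * lob (u + π/2) := lobf_C β u
    have h0val : lobf 0 u = Gfun u 0 - (2/3) * lob u - (4/3) * lob (u + π/2) := lobf_C 0 u
    have h0sf : lobf 0 u = (4/3) * sfun u := lobf_zero_val u
    have hineq : -(8/3) * lob (π/4) ≤ lobf β u := by
      have : lobf β u ≥ (4/3) * sfun u := by linarith [hge.1]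
      rw [hsv] at this
      linarith
    refine ⟨hineq, ?_, ?_⟩
    · intro h
      -- equality forces Gfun u β = Gfun u 0 and sfun v = 2L
      have hGeq : Gfun u 0 = Gfun u β ∧ sfun v = 2 * lob (π/4) := by
        constructor
        · by_contra hne
          have : Gfun u 0 < Gfun u β := lt_of_le_of_ne hge.1 hne
          have h2 : lobf β u > (4/3) * sfun u := by linarith
          rw [hsv] at h2
          linarith
        · by_contra hne
          have hlt : sfun v < 2 * lob (π/4) := lt_of_le_of_ne hsvle hne
          have h2 : lobf β u ≥ (4/3) * sfun u := by linarith [hge.1]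
          rw [hsv] at h2
          linarith
      have hβ0 : β = 0 := hge.2.mp hGeq.1
      have hveq : v = π/4 := by
        by_contra hne
        have := sfun_lt_on hvmem hne
        linarith [hGeq.2]
      exact ⟨hβ0, by rw [hv] at hveq; linarith⟩
    · rintro ⟨hβ0, hu34⟩
      have hveq : v = π/4 := by rw [hv, hu34]; ring
      have : lobf β u = (4/3) * sfun u := by rw [hβ0, h0sf]
      rw [this, hsv, hveq, sfun_pi_four]
      ring

lemma lobf_neg_left (β u : ℝ) : lobf (-β) u = lobf β u := by
  rw [lobf, lobf]
  have e1 : lob (-β + u) = -lob (β - u) := by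
    rw [show -β + u = -(β - u) from by ring, lob_odd]
  have e2 : lob (-β - u) = -lob (β + u) := by
    rw [show -β - u = -(β + u) from by ring, lob_odd]
  rw [e1, e2]; ring

/-- The minimum of `f(α,θ)` is `−(8/3)Λ(π/4)`, attained exactly when
`α ≡ 0 (mod π)` and `θ ≡ 3π/4 (mod π)`. -/
theorem stmt1 (α θ : ℝ) :
    -(8/3) * lob (π/4) ≤ lobf α θ ∧
      (lobf α θ = -(8/3) * lob (π/4) ↔
        ((∃ a : ℤ, α = a * π) ∧ (∃ b : ℤ, θ = 3*π/4 + b * π))) := by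
  have hπ := Real.pi_pos
  set k : ℤ := ⌊θ / π⌋ with hk
  set u : ℝ := θ - k * π with hudef
  have hu : u ∈ Ico 0 π := by
    constructor
    · have := Int.floor_le (θ / π)
      rw [hudef, sub_nonneg]
      calc (k:ℝ) * π ≤ (θ/π) * π := by
            apply mul_le_mul_of_nonneg_right _ hπ.le
            exact this
      _ = θ := by field_simp
    · have := Int.lt_floor_add_one (θ / π)
      rw [hudef, sub_lt_iff_lt_add]
      have h2 : θ / π < k + 1 := this
      have h3 : θ < (k + 1) * π := by
        have := mul_lt_mul_of_pos_right h2 hπ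
        rwa [div_mul_cancel₀ _ (ne_of_gt hπ)] at this
      linarith
  set m : ℤ := ⌊α / π + 1/2⌋ with hm
  set β' : ℝ := α - m * π with hbdef
  have hβ' : β' ∈ Ico (-(π/2)) (π/2) := by
    constructor
    · have := Int.floor_le (α / π + 1/2)
      have h3 : (m : ℝ) - 1/2 ≤ α / π := by linarith
      have h4 : ((m:ℝ) - 1/2) * π ≤ α := by
        have := mul_le_mul_of_nonneg_right h3 hπ.le
        rwa [div_mul_cancel₀ _ (ne_of_gt hπ)] at this
      rw [show ((m:ℝ) - 1/2) * π = (m:ℝ)*π - π/2 from by ring] at h4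
      rw [hbdef]
      linarith
    · have := Int.lt_floor_add_one (α / π + 1/2)
      have h3 : α / π < (m:ℝ) + 1/2 := by linarith
      have h4 : α < ((m:ℝ) + 1/2) * π := by
        have := mul_lt_mul_of_pos_right h3 hπ
        rwa [div_mul_cancel₀ _ (ne_of_gt hπ)] at this
      rw [show ((m:ℝ) + 1/2) * π = (m:ℝ)*π + π/2 from by ring] at h4
      rw [hbdef]
      linarith
  have hα : α = β' + m * π := by rw [hbdef]; ring
  have hθ : θ = u + k * π := by rw [hudef]; ring
  have hred : lobf α θ = lobf β' u := by
    rw [lobf, lobf]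
    have l1 : lob (α + θ) = lob (β' + u) := by
      rw [show α + θ = (β' + u) + ((m + k : ℤ):ℝ) * π from by push_cast; rw [hα, hθ]; ring]
      exact lob_add_int _ _
    have l2 : lob (α - θ) = lob (β' - u) := by
      rw [show α - θ = (β' - u) + ((m - k : ℤ):ℝ) * π from by push_cast; rw [hα, hθ]; ring]
      exact lob_add_int _ _
    have l3 : lob θ = lob u := by
      rw [show θ = u + ((k : ℤ):ℝ) * π from by push_cast; rw [hθ]]
      exact lob_add_int _ _
    have l4 : lob (2*θ) = lob (2*u) := by
      rw [show 2*θ = 2*u + ((2*k : ℤ):ℝ) * π from by push_cast; rw [hθ]; ring]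
      exact lob_add_int _ _
    rw [l1, l2, l3, l4]
  have hred2 : lobf β' u = lobf |β'| u := by
    rcases le_or_gt 0 β' with h | h
    · rw [abs_of_nonneg h]
    · rw [abs_of_neg h]
      exact (lobf_neg_left β' u).symm
  have hmem : |β'| ∈ Icc 0 (π/2) := by
    constructor
    · exact abs_nonneg _
    · rw [abs_le]
      exact ⟨hβ'.1, hβ'.2.le⟩
  obtain ⟨hineq, hiff⟩ := key_lemma hmem hu
  have heq : lobf α θ = lobf |β'| u := by rw [hred, hred2]
  constructor
  · rw [heq]; exact hineq
  · rw [heq, hiff]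
    constructor
    · rintro ⟨h1, h2⟩
      have hb0 : β' = 0 := abs_eq_zero.mp h1
      constructor
      · exact ⟨m, by rw [hα, hb0]; ring⟩
      · exact ⟨k, by rw [hθ, h2]⟩
    · rintro ⟨⟨a, ha⟩, ⟨b, hb⟩⟩
      constructor
      · have hβeq : β' = ((a - m : ℤ):ℝ) * π := by
          rw [hbdef, ha]; push_cast; ring
        have habs : |((a - m : ℤ):ℝ)| * π < π := by
          have h1 : |β'| < π := by
            rcases abs_cases β' with ⟨he, _⟩ | ⟨he, _⟩ <;> rw [he] <;>
              [linarith [hβ'.2]; linarith [hβ'.1]]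
          rw [hβeq, abs_mul, abs_of_pos hπ] at h1
          exact h1
        have hlt1 : |((a - m : ℤ):ℝ)| < 1 := by
          by_contra hcon
          push_neg at hcon
          nlinarith
        have : a - m = 0 := by
          have h6 : |a - m| < 1 := by exact_mod_cast hlt1
          have h7 := abs_lt.mp h6
          omega
        rw [hβeq, this]
        simp
      · have hueq' : u - 3*π/4 = ((b - k : ℤ):ℝ) * π := by
          rw [hudef, hb]; push_cast; ring
        have habs : |((b - k : ℤ):ℝ)| * π < π := by
          have h1 : |u - 3*π/4| < π := by
            rcases abs_cases (u - 3*π/4) with ⟨he, _⟩ | ⟨he, _⟩ <;> rw [he] <;>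
              [linarith [hu.2]; linarith [hu.1]]
          rw [hueq', abs_mul, abs_of_pos hπ] at h1
          exact h1
        have hlt1 : |((b - k : ℤ):ℝ)| < 1 := by
          by_contra hcon
          push_neg at hcon
          nlinarith
        have hbk : b - k = 0 := by
          have h6 : |b - k| < 1 := by exact_mod_cast hlt1
          have h7 := abs_lt.mp h6
          omega
        have : u = 3*π/4 := by
          rw [show ((b - k : ℤ):ℝ) = 0 from by rw [hbk]; simp] at hueq'
          linarith
        exact this
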